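/- Main theorem (abstract form): let ALG be an online k-server algorithm and suppose (i) ALG is α-competitive, i.e., for every initial configuration A₀ there is β(A₀) ≥ 0 with ALG(A₀,τ) ≤ α·OPT(A₀,τ) + β(A₀) for all finite request sequences τ; (ii) for every A₀ and ρ there exists an 'anchor' sequence σ of requests in A₀ such that ALG(A₀, (ρσ)^q) = q·ALG(A₀, ρσ), OPT(A₀, (ρσ)^q) = q·OPT(A₀, ρσ), and OPT(A₀, ρσ) ≤ 2·OPT(A₀, ρ). Then ALG is strictly 2α-competitive: ALG(A₀, ρ) ≤ 2α·OPT(A₀, ρ) for every A₀ and ρ. -/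

import Mathlib

open Finset

variable {V : Type*}

/-- Matching distance between two finite configurations: the infimum over
bijections `f : X ≃ Y` of the total distance moved. -/
noncomputable def matchDist [MetricSpace V] (X Y : Finset V) : ℝ :=
  sInf { c | ∃ f : (X : Type _) ≃ (Y : Type _), c = ∑ x : X, dist (x : V) ((f x : V)) }

/-- Total movement cost of a schedule of configurations. -/
noncomputable def schedCost [MetricSpace V] {n : ℕ} (C : Fin (n + 1) → Finset V) : ℝ :=
  ∑ i : Fin n, matchDist (C i.castSucc) (C i.succ)

/-- `C` is a schedule of `k`-configurations serving the request sequence `ρ`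
starting from `A₀`. -/
def Serves (k : ℕ) (A₀ : Finset V) (ρ : List V) (C : Fin (ρ.length + 1) → Finset V) : Prop :=
  C 0 = A₀ ∧ (∀ i, (C i).card = k) ∧ ∀ i : Fin ρ.length, ρ.get i ∈ C i.succ

/-- The work function: the cheapest cost to serve `ρ` from `A₀` and end in `X`. -/
noncomputable def workFn [MetricSpace V] (k : ℕ) (A₀ : Finset V) (ρ : List V)
    (X : Finset V) : ℝ :=
  sInf { c | ∃ C : Fin (ρ.length + 1) → Finset V,
    Serves k A₀ ρ C ∧ C (Fin.last _) = X ∧ c = schedCost C }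

/-- The optimal cost of serving `ρ` from `A₀`. -/
noncomputable def OPTcost [MetricSpace V] (k : ℕ) (A₀ : Finset V) (ρ : List V) : ℝ :=
  sInf { c | ∃ X : Finset V, X.card = k ∧ c = workFn k A₀ ρ X }

/-- A lazy schedule: each round, at most one server moves, onto the current request. -/
def IsLazy [DecidableEq V] (ρ : List V) (C : Fin (ρ.length + 1) → Finset V) : Prop :=
  ∀ i : Fin ρ.length, ∃ x ∈ C i.castSucc,
    C i.succ = insert (ρ.get i) ((C i.castSucc).erase x)


/-- main theorem, abstract form: a competitive online algorithm
admitting anchors is strictly `2α`-competitive. -/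
theorem strictly_competitive [MetricSpace V] (k : ℕ) (hk : 0 < k)
    (ALG OPT : Finset V → List V → ℝ) (α : ℝ) (hα : 0 < α)
    (hALGnonneg : ∀ A₀ τ, 0 ≤ ALG A₀ τ) (hOPTnonneg : ∀ A₀ τ, 0 ≤ OPT A₀ τ)
    (hmono : ∀ A₀ ρ σ, ALG A₀ ρ ≤ ALG A₀ (ρ ++ σ))
    (hcomp : ∀ A₀ : Finset V, A₀.card = k → ∃ β : ℝ, 0 ≤ β ∧
      ∀ τ : List V, ALG A₀ τ ≤ α * OPT A₀ τ + β)
    (hanchor : ∀ A₀ : Finset V, A₀.card = k → ∀ ρ : List V,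
      ∃ σ : List V, (∀ r ∈ σ, r ∈ A₀) ∧
        (∀ q : ℕ, 1 ≤ q →
          ALG A₀ (List.flatten (List.replicate q (ρ ++ σ))) = q * ALG A₀ (ρ ++ σ) ∧
          OPT A₀ (List.flatten (List.replicate q (ρ ++ σ))) = q * OPT A₀ (ρ ++ σ)) ∧
        OPT A₀ (ρ ++ σ) ≤ 2 * OPT A₀ ρ) :
    ∀ A₀ : Finset V, A₀.card = k → ∀ ρ : List V,
      ALG A₀ ρ ≤ 2 * α * OPT A₀ ρ := by
  intro A₀ hA₀ ρ
  obtain ⟨β, hβ, hβ'⟩ := hcomp A₀ hA₀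
  obtain ⟨σ, -, hq, hσ2⟩ := hanchor A₀ hA₀ ρ
  have key : ALG A₀ (ρ ++ σ) ≤ α * OPT A₀ (ρ ++ σ) := by
    by_contra h
    push_neg at h
    set x := ALG A₀ (ρ ++ σ) - α * OPT A₀ (ρ ++ σ) with hx
    have hx0 : 0 < x := by simp [hx]; linarith
    obtain ⟨q, hqgt⟩ := exists_nat_gt (β / x)
    have hq1 : 1 ≤ q := by
      by_contra hq1
      push_neg at hq1
      interval_cases q
      · have : β / x ≥ 0 := div_nonneg hβ hx0.le
        simp at hqgt; linarith
    obtain ⟨hA, hO⟩ := hq q hq1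
    have h1 := hβ' (List.flatten (List.replicate q (ρ ++ σ)))
    rw [hA, hO] at h1
    have hqx : (q : ℝ) * x ≤ β := by ring_nf; ring_nf at h1; linarith
    have : β / x < q := hqgt
    have := (div_lt_iff₀ hx0).mp this
    linarith
  calc ALG A₀ ρ ≤ ALG A₀ (ρ ++ σ) := hmono A₀ ρ σ
    _ ≤ α * OPT A₀ (ρ ++ σ) := key
    _ ≤ α * (2 * OPT A₀ ρ) := by
        exact mul_le_mul_of_nonneg_left hσ2 hα.le
    _ = 2 * α * OPT A₀ ρ := by ring
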